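/- Optimal mixing probability for the Clifford-plus-phase ensemble: for every c ∈ [−1,1] and every p ∈ [0,1], Δ(p,c) ≤ (1−c) / (8·(4 − 2c + √(14(1−c)))), and equality holds at p = p̃(c) := (4c² + c·√(14(1−c)) − 5c + 1) / (4c² − 2c + 2). Moreover p̃(c) ∈ [0,1], so the maximum of Δ(·,c) over p ∈ [0,1] equals Δ̃(c) := (1−c)/(8(4 − 2c + √(14(1−c)))). -/

import Mathlib

/-- The spectral gap `Δ(p,c)` of the Clifford-plus-phase ensemble on the Clifford-invariant
subspace (Eq. (eq:gap-4)). -/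
noncomputable def cliffordPhaseGap (p c : ℝ) : ℝ :=
  1/4 - (c/4) * (1 - p) -
    (1/8) * Real.sqrt (4*c^2*(p - 1)^2 - 2*c*(p - 4)*(p - 1) + 2*p*(p - 1) + 4)

/-- The optimal Clifford probability `p̃(c)`. -/
noncomputable def pOpt (c : ℝ) : ℝ :=
  (4*c^2 + c * Real.sqrt (14*(1 - c)) - 5*c + 1) / (4*c^2 - 2*c + 2)

/-- The optimal gap `Δ̃(c)`. -/
noncomputable def gapOpt (c : ℝ) : ℝ :=
  (1 - c) / (8 * (4 - 2*c + Real.sqrt (14*(1 - c))))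

/-- **Optimal mixing probability for the Clifford-plus-phase ensemble**: for every
`c ∈ [−1,1]`, `Δ(p,c) ≤ Δ̃(c)` for all `p ∈ [0,1]`, with equality at `p = p̃(c)`; moreover
`p̃(c) ∈ [0,1]`, so the maximum of `Δ(·,c)` over `[0,1]` equals `Δ̃(c)`. -/
theorem cliffordPhaseGap_optimal_p (c : ℝ) (hc : c ∈ Set.Icc (-1:ℝ) 1) :
    (∀ p ∈ Set.Icc (0:ℝ) 1, cliffordPhaseGap p c ≤ gapOpt c) ∧
    cliffordPhaseGap (pOpt c) c = gapOpt c ∧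
    pOpt c ∈ Set.Icc (0:ℝ) 1 := by
  obtain ⟨hc1, hc2⟩ := hc
  have hs : 0 ≤ Real.sqrt (14*(1 - c)) := Real.sqrt_nonneg _
  set s : ℝ := Real.sqrt (14*(1 - c)) with hs_def
  have hs2 : s^2 = 14*(1 - c) := Real.sq_sqrt (by linarith)
  have hD : (0:ℝ) < 4*c^2 - 2*c + 2 := by nlinarith [sq_nonneg (c - 1), sq_nonneg c]
  set D : ℝ := 4*c^2 - 2*c + 2 with hD_def
  have hden : 0 < 4 - 2*c + s := by linarith
  -- rationalized form of gapOpt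
  have h8G : 8 * gapOpt c = (1 - c) * (4 - 2*c - s) / D := by
    rw [gapOpt, ← hs_def, hD_def]
    rw [mul_div_assoc', div_eq_div_iff (mul_pos (by norm_num) hden).ne' (show (4*c^2 - 2*c + 2 : ℝ) ≠ 0 from hD.ne')]
    linear_combination (8*(1 - c)) * hs2
  set N : ℝ := 4*c^2 + c * s - 5*c + 1 with hN_def
  -- the key polynomial certificate at a given p
  have key : ∀ p : ℝ,
      (4*c^2*(p - 1)^2 - 2*c*(p - 4)*(p - 1) + 2*p*(p - 1) + 4) * D^2
        = ((2 - 2*c + 2*c*p)*D - (1 - c)*(4 - 2*c - s))^2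
          + (2 - 2*c) * (p*D - N)^2 := by
    intro p
    rw [hN_def, hD_def]
    linear_combination (-(1 - c) * (4*c^2 - 2*c + 2) / 2) * hs2
  -- main inequality
  have main : ∀ p : ℝ, cliffordPhaseGap p c ≤ gapOpt c := by
    intro p
    set Q : ℝ := 4*c^2*(p - 1)^2 - 2*c*(p - 4)*(p - 1) + 2*p*(p - 1) + 4 with hQ_def
    set L : ℝ := 2 - 2*c*(1 - p) - (1 - c)*(4 - 2*c - s)/D with hL_def
    have hLD : L * D = (2 - 2*c + 2*c*p)*D - (1 - c)*(4 - 2*c - s) := by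
      rw [hL_def, sub_mul, sub_mul, div_mul_cancel₀ _ hD.ne']
      ring
    have hQL : L^2 ≤ Q := by
      have hk := key p
      rw [← hLD, ← hQ_def] at hk
      nlinarith [mul_nonneg (show (0:ℝ) ≤ 2 - 2*c by linarith) (sq_nonneg (p*D - N)),
        mul_pos hD hD, pow_pos hD 2]
    have hsq : L ≤ Real.sqrt Q := by
      calc L ≤ |L| := le_abs_self L
        _ = Real.sqrt (L^2) := (Real.sqrt_sq_eq_abs L).symm
        _ ≤ Real.sqrt Q := Real.sqrt_le_sqrt hQL
    have hcp : cliffordPhaseGap p c = 1/4 - (c/4) * (1 - p) - (1/8) * Real.sqrt Q := rfl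
    rw [hcp, hL_def] at *
    linarith [h8G, hsq]
  refine ⟨fun p _ => main p, ?_, ?_⟩
  · -- equality at pOpt
    have hpOpt : pOpt c = N / D := rfl
    set q : ℝ := N / D with hq_def
    have hqD : q * D = N := div_mul_cancel₀ N hD.ne'
    have hQval : 4*c^2*(q - 1)^2 - 2*c*(q - 4)*(q - 1) + 2*q*(q - 1) + 4 = (s/2)^2 := by
      have hk := key q
      have hLDv : (2 - 2*c + 2*c*q)*D - (1 - c)*(4 - 2*c - s) = s/2 * D := by
        have h1 : (2 - 2*c + 2*c*q)*D = (2 - 2*c)*D + 2*c*(q*D) := by ring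
        rw [h1, hqD, hN_def, hD_def]; ring
      have h2 : q*D - N = 0 := by rw [hqD]; ring
      rw [hLDv, h2] at hk
      have hD2 : (0:ℝ) < D^2 := by positivity
      have h3 : (4*c^2*(q - 1)^2 - 2*c*(q - 4)*(q - 1) + 2*q*(q - 1) + 4 - (s/2)^2) * D^2 = 0 := by
        rw [sub_mul, hk]; ring
      rcases mul_eq_zero.mp h3 with h | h
      · linarith
      · exact absurd h hD2.ne'
    have hcp : cliffordPhaseGap (pOpt c) c
        = 1/4 - (c/4) * (1 - q) - (1/8) * Real.sqrt ((s/2)^2) := by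
      rw [cliffordPhaseGap, hpOpt, hQval]
    rw [hcp, Real.sqrt_sq (by linarith : (0:ℝ) ≤ s/2)]
    have hfin : 8 * (1/4 - (c/4) * (1 - q) - (1/8) * (s/2)) = (1 - c) * (4 - 2*c - s) / D := by
      rw [hq_def, hN_def, eq_div_iff hD.ne']
      field_simp
      rw [hD_def]
      ring
    linarith [h8G, hfin]
  · -- pOpt ∈ [0,1]
    have hN0 : 0 ≤ N := by
      rw [hN_def]
      nlinarith [hs, hs2, mul_nonneg hs (sq_nonneg (s - 3)), sq_nonneg (s - 3),
        sq_nonneg (s*c), mul_nonneg (mul_nonneg hs hs) hs]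
    have hND : N ≤ D := by
      rw [hN_def, hD_def]
      nlinarith [hs, hs2, mul_nonneg hs (sq_nonneg (s - 3)), sq_nonneg (s - 3),
        mul_nonneg (mul_nonneg hs hs) hs]
    constructor
    · exact div_nonneg hN0 hD.le
    · rw [pOpt]
      exact (div_le_one hD).mpr hND
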